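/- The kernel of φ_2 : C[q_{00},q_{01},q_{10},q_{11}] → C[a_0^{(1)},a_0^{(2)},a_0^{(3)},a_1^{(1)},a_1^{(2)},a_1^{(3)}] defined by q_{g1 g2} ↦ a_{g1}^{(1)} a_{g2}^{(2)} a_{g1+g2}^{(3)} is the zero ideal. -/

import Mathlib

open MvPolynomial

noncomputable def phi (n : ℕ) :
    MvPolynomial (Fin n → ZMod 2) ℂ →ₐ[ℂ] MvPolynomial (ZMod 2 × Fin (n + 1)) ℂ :=
  aeval fun σ => (∏ i : Fin n, X (σ i, Fin.castSucc i)) * X (∑ i, σ i, Fin.last n)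

/-- Exponent vector of the image of `X σ` under `phi 2`. -/
noncomputable def wfun (σ : Fin 2 → ZMod 2) : (ZMod 2 × Fin 3) →₀ ℕ :=
  Finsupp.single (σ 0, 0) 1 + Finsupp.single (σ 1, 1) 1 + Finsupp.single (σ 0 + σ 1, 2) 1

/-- The map on exponents induced by `phi 2`. -/
noncomputable def Emap : ((Fin 2 → ZMod 2) →₀ ℕ) →+ ((ZMod 2 × Fin 3) →₀ ℕ) where
  toFun s := ∑ σ : Fin 2 → ZMod 2, s σ • wfun σ
  map_zero' := by simp
  map_add' := by
    intro s t
    simp [add_smul, Finset.sum_add_distrib]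

lemma Emap_single (σ : Fin 2 → ZMod 2) : Emap (Finsupp.single σ 1) = wfun σ := by
  simp [Emap, Finsupp.single_apply]

lemma Emap_apply (s : (Fin 2 → ZMod 2) →₀ ℕ) (p : ZMod 2 × Fin 3) :
    Emap s p = ∑ σ : Fin 2 → ZMod 2, s σ * wfun σ p := by
  simp [Emap, Finsupp.finset_sum_apply]

lemma univ_pi : (Finset.univ : Finset (Fin 2 → ZMod 2)) = {![0,0], ![0,1], ![1,0], ![1,1]} := by
  decide

lemma Emap_injective : Function.Injective Emap := by
  intro s t h
  have key : ∀ p : ZMod 2 × Fin 3,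
      ∑ σ : Fin 2 → ZMod 2, s σ * wfun σ p = ∑ σ : Fin 2 → ZMod 2, t σ * wfun σ p := by
    intro p
    rw [← Emap_apply, ← Emap_apply, h]
  have expand : ∀ (u : (Fin 2 → ZMod 2) →₀ ℕ) (p : ZMod 2 × Fin 3),
      ∑ σ : Fin 2 → ZMod 2, u σ * wfun σ p =
        u ![0,0] * wfun ![0,0] p + u ![0,1] * wfun ![0,1] p + u ![1,0] * wfun ![1,0] p
          + u ![1,1] * wfun ![1,1] p := by
    intro u p
    rw [univ_pi]
    rw [Finset.sum_insert (by decide), Finset.sum_insert (by decide),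
      Finset.sum_insert (by decide), Finset.sum_singleton]
    ring
  have e1 := key (0, 0); have e2 := key (1, 0)
  have e3 := key (0, 1); have e4 := key (1, 1)
  have e5 := key (0, 2); have e6 := key (1, 2)
  rw [expand s, expand t] at e1 e2 e3 e4 e5 e6
  simp only [wfun, Finsupp.add_apply, Finsupp.single_apply] at e1 e2 e3 e4 e5 e6
  simp (config := { decide := true }) only [Matrix.cons_val_zero, Matrix.cons_val_one,
    Matrix.head_cons, Prod.mk.injEq, if_true, if_false, mul_one, mul_zero, add_zero,
    zero_add] at e1 e2 e3 e4 e5 e6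
  have hσ : ∀ σ : Fin 2 → ZMod 2, σ = ![σ 0, σ 1] := by
    intro σ; funext i; fin_cases i <;> rfl
  have h2 : ∀ a : ZMod 2, a = 0 ∨ a = 1 := by decide
  ext σ
  rw [hσ σ]
  rcases h2 (σ 0) with h0 | h0 <;> rcases h2 (σ 1) with h1 | h1 <;> rw [h0, h1] <;> omega

theorem stmt_11 : RingHom.ker (phi 2).toRingHom = ⊥ := by
  have hphi : (phi 2).toRingHom = AddMonoidAlgebra.mapDomainRingHom ℂ Emap := by
    apply MvPolynomial.ringHom_ext
    · intro r
      show (phi 2) (C r) = AddMonoidAlgebra.mapDomain Emap (AddMonoidAlgebra.single 0 r)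
      rw [AddMonoidAlgebra.mapDomain_single, map_zero, MvPolynomial.single_eq_monomial,
        MvPolynomial.monomial_zero']
      simp only [phi]
      rw [aeval_C, MvPolynomial.algebraMap_eq]
    · intro σ
      show (phi 2) (X σ) = AddMonoidAlgebra.mapDomain Emap (AddMonoidAlgebra.single (Finsupp.single σ 1) 1)
      rw [AddMonoidAlgebra.mapDomain_single, Emap_single]
      simp only [phi, aeval_X]
      rw [Fin.prod_univ_two, Fin.sum_univ_two]
      rw [MvPolynomial.X, MvPolynomial.X, MvPolynomial.X,
        MvPolynomial.monomial_mul, MvPolynomial.monomial_mul,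
        MvPolynomial.single_eq_monomial, wfun]
      norm_num
      rfl
  rw [hphi]
  rw [RingHom.ker_eq_bot_iff_eq_zero]
  intro x hx
  have : Function.Injective (AddMonoidAlgebra.mapDomainRingHom ℂ Emap) := by
    intro a b hab
    exact AddMonoidAlgebra.mapDomain_injective Emap_injective hab
  exact this (by simpa using hx)
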